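/- If n is an odd perfect number whose smallest prime factor p₁ satisfies p₁ ≥ 11, then S(n) < 25/(8 p₁ log p₁). -/

import Mathlib

open Real Finset

/-- `H n = ∏_{p ∣ n} p/(p-1)` over the distinct prime divisors of `n`. -/
noncomputable def H (n : ℕ) : ℝ := ∏ p ∈ n.primeFactors, (p : ℝ) / ((p : ℝ) - 1)

/-- The surplus `S(n) = H(n) - 2`. -/
noncomputable def S (n : ℕ) : ℝ := H n - 2

/-- Weierstrass product inequality. -/
lemma weier (F : Finset ℕ) (f : ℕ → ℝ) (h0 : ∀ i ∈ F, 0 ≤ f i) (h1 : ∀ i ∈ F, f i ≤ 1) :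
    1 - ∑ i ∈ F, (1 - f i) ≤ ∏ i ∈ F, f i := by
  classical
  induction F using Finset.cons_induction with
  | empty => simp
  | cons a F ha ih =>
    rw [Finset.prod_cons, Finset.sum_cons]
    have h0a := h0 a (Finset.mem_cons_self ..)
    have h1a := h1 a (Finset.mem_cons_self ..)
    have ih' := ih (fun i hi => h0 i (Finset.mem_cons_of_mem hi))
      (fun i hi => h1 i (Finset.mem_cons_of_mem hi))
    have hs : 0 ≤ ∑ i ∈ F, (1 - f i) :=
      Finset.sum_nonneg fun i hi => by linarith [h1 i (Finset.mem_cons_of_mem hi)]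
    nlinarith [mul_le_mul_of_nonneg_left ih' h0a]

/-- Sum of inverse cubes over a finite set of distinct naturals all `≥ k`. -/
lemma cube_sum (F : Finset ℕ) (k : ℕ) (hk : 2 ≤ k) (hF : ∀ p ∈ F, k ≤ p) :
    ∑ p ∈ F, ((p:ℝ)^3)⁻¹ ≤ (2 * ((k:ℝ) - 1)^2)⁻¹ := by
  classical
  set M : ℕ := F.sup id + 1 with hM
  have hsub : F ⊆ Finset.Ico k M := by
    intro p hp
    exact Finset.mem_Ico.mpr ⟨hF p hp, Nat.lt_succ_of_le (Finset.le_sup (f := id) hp)⟩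
  have h1 : ∑ p ∈ F, ((p:ℝ)^3)⁻¹ ≤ ∑ p ∈ Finset.Ico k M, ((p:ℝ)^3)⁻¹ :=
    Finset.sum_le_sum_of_subset_of_nonneg hsub (fun i _ _ => by positivity)
  set G : ℕ → ℝ := fun i => (2 * ((k:ℝ) + i - 1)^2)⁻¹ with hG
  have hgoal : ∀ x : ℝ, 2 ≤ x → (x^3)⁻¹ ≤ (2*(x-1)^2)⁻¹ - (2*x^2)⁻¹ := by
    intro x hx
    have h1 : (0:ℝ) < x - 1 := by linarith
    have e1 : (2*(x-1)^2)⁻¹ - (2*x^2)⁻¹ = (2*x-1)/(2*x^2*(x-1)^2) := by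
      field_simp; ring
    rw [e1, inv_eq_one_div, div_le_div_iff₀ (by positivity) (by positivity)]
    nlinarith
  have h2 : ∑ p ∈ Finset.Ico k M, ((p:ℝ)^3)⁻¹ ≤ ∑ i ∈ Finset.range (M - k), (G i - G (i+1)) := by
    rw [Finset.sum_Ico_eq_sum_range]
    apply Finset.sum_le_sum
    intro i _
    have hki : (2:ℝ) ≤ (k:ℝ) + i := by
      have h2k : (2:ℝ) ≤ (k:ℝ) := by exact_mod_cast hk
      have : (0:ℝ) ≤ (i:ℝ) := Nat.cast_nonneg i
      linarith
    have hcast : ((k + i : ℕ) : ℝ) = (k:ℝ) + i := by push_cast; ring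
    rw [hcast, hG]
    have hmain := hgoal ((k:ℝ)+i) hki
    push_cast
    ring_nf
    ring_nf at hmain
    linarith
  have h3 : ∑ i ∈ Finset.range (M - k), (G i - G (i+1)) = G 0 - G (M - k) :=
    Finset.sum_range_sub' G (M - k)
  have h4 : 0 ≤ G (M - k) := by
    have : (2:ℝ) ≤ (k:ℝ) := by exact_mod_cast hk
    have : (0:ℝ) ≤ ((M - k : ℕ):ℝ) := Nat.cast_nonneg _
    rw [hG]; positivity
  have h5 : G 0 = (2 * ((k:ℝ) - 1)^2)⁻¹ := by rw [hG]; norm_num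
  linarith

set_option maxHeartbeats 1000000

theorem stmt_11 (n : ℕ) (hodd : Odd n) (hperf : Nat.Perfect n) (hp1 : 11 ≤ n.minFac) :
    S n < 25 / (8 * (n.minFac : ℝ) * Real.log n.minFac) := by
  classical
  have hn0 : 0 < n := hperf.2
  have hn0' : n ≠ 0 := hn0.ne'
  set F := n.primeFactors with hF
  set e : ℕ → ℕ := fun p => n.factorization p with he
  -- basic facts about primes in F
  have hmem : ∀ p ∈ F, p.Prime ∧ p ∣ n ∧ 11 ≤ p ∧ 1 ≤ e p := by
    intro p hp
    have hpp := Nat.prime_of_mem_primeFactors hp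
    have hpd := Nat.dvd_of_mem_primeFactors hp
    refine ⟨hpp, hpd, le_trans hp1 (Nat.minFac_le_of_dvd hpp.two_le hpd), ?_⟩
    have : p ∈ (n.factorization).support := by rwa [Nat.support_factorization]
    exact Nat.pos_of_ne_zero (Finsupp.mem_support_iff.mp this)
  -- the divisor-sum product identity over ℕ
  have hsum : ∑ d ∈ n.divisors, d = 2 * n :=
    (Nat.perfect_iff_sum_divisors_eq_two_mul hn0).mp hperf
  have hprod : 2 * n = ∏ p ∈ F, ∑ k ∈ Finset.range (e p + 1), p ^ k := by
    rw [← hsum]; exact Nat.sum_divisors hn0'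
  -- at most one prime has odd exponent
  have hdvd2 : ∀ p ∈ F, Odd (e p) → 2 ∣ ∑ k ∈ Finset.range (e p + 1), p ^ k := by
    intro p hp hodde
    obtain ⟨hpp, hpd, hp11, -⟩ := hmem p hp
    have hpodd : p % 2 = 1 := by
      rcases Nat.Prime.eq_two_or_odd hpp with h2 | h
      · exfalso; omega
      · exact h
    rw [← ZMod.natCast_eq_zero_iff]
    push_cast
    have hpc : (p : ZMod 2) = 1 := by
      rw [← ZMod.natCast_mod p 2, hpodd]; norm_num
    simp only [hpc, one_pow, Finset.sum_const, Finset.card_range, nsmul_eq_mul, mul_one]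
    obtain ⟨m, hm⟩ := hodde
    rw [hm, show 2*m+1+1 = 2*(m+1) by ring, Nat.cast_mul, ZMod.natCast_self, zero_mul]
  have hatmost : ∀ p ∈ F, ∀ r ∈ F, Odd (e p) → Odd (e r) → p = r := by
    intro p hp r hr hop hor
    by_contra hne
    have hrp : r ∈ F.erase p := Finset.mem_erase.mpr ⟨fun h => hne h.symm, hr⟩
    have hsplit : ∏ x ∈ F, (∑ k ∈ Finset.range (e x + 1), x ^ k)
        = (∑ k ∈ Finset.range (e p + 1), p ^ k) *
          ((∑ k ∈ Finset.range (e r + 1), r ^ k) *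
            ∏ x ∈ (F.erase p).erase r, (∑ k ∈ Finset.range (e x + 1), x ^ k)) := by
      rw [Finset.mul_prod_erase _ (fun x => ∑ k ∈ Finset.range (e x + 1), x ^ k) hrp,
        Finset.mul_prod_erase _ (fun x => ∑ k ∈ Finset.range (e x + 1), x ^ k) hp]
    have h4 : 4 ∣ 2 * n := by
      rw [hprod, hsplit]
      obtain ⟨a, ha⟩ := hdvd2 p hp hop
      obtain ⟨b, hb⟩ := hdvd2 r hr hor
      exact ⟨a * b * ∏ x ∈ (F.erase p).erase r, (∑ k ∈ Finset.range (e x + 1), x ^ k),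
        by rw [ha, hb]; ring⟩
    obtain ⟨c, hc⟩ := h4
    have := Nat.odd_iff.mp hodd
    omega
  have key : ∃ q : ℕ, ∀ p ∈ F, p ≠ q → Even (e p) := by
    by_cases hex : ∃ q ∈ F, Odd (e q)
    · obtain ⟨q, hqF, hq⟩ := hex
      exact ⟨q, fun p hp hne => Nat.not_odd_iff_even.mp
        (fun ho => hne (hatmost p hp q hqF ho hq))⟩
    · push_neg at hex
      exact ⟨0, fun p hp _ => Nat.not_odd_iff_even.mp (hex p hp)⟩
  obtain ⟨q, hq⟩ := key
  -- real setup
  set a : ℝ := (n.minFac : ℝ) with haa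
  have ha : (11:ℝ) ≤ a := by rw [haa]; exact_mod_cast hp1
  have ha0 : (0:ℝ) < a := by linarith
  set t : ℕ → ℝ := fun p => 1 - ((p:ℝ) ^ (e p + 1))⁻¹ with ht
  set P : ℝ := ∏ p ∈ F, t p with hP
  -- product identity over ℝ
  have hnR : (n:ℝ) = ∏ p ∈ F, (p:ℝ) ^ (e p) := by
    have h := Nat.factorization_prod_pow_eq_self hn0'
    rw [Finsupp.prod] at h
    rw [Nat.support_factorization] at h
    exact_mod_cast (congrArg (Nat.cast : ℕ → ℝ) h).symm
  have hfac : ∀ p ∈ F, (∑ k ∈ Finset.range (e p + 1), (p:ℝ) ^ k)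
      = ((p:ℝ)/((p:ℝ)-1) * t p) * (p:ℝ) ^ (e p) := by
    intro p hp
    obtain ⟨hpp, -, hp11, -⟩ := hmem p hp
    have hp11R : (11:ℝ) ≤ (p:ℝ) := by exact_mod_cast hp11
    have hpne1 : ((p:ℝ)) ≠ 1 := by linarith
    have hpne0 : ((p:ℝ)) ≠ 0 := by linarith
    have hps0 : ((p:ℝ)) - 1 ≠ 0 := by intro h; apply hpne1; linarith
    have hpow : ((p:ℝ)) ^ (e p + 1) ≠ 0 := pow_ne_zero _ hpne0
    rw [geom_sum_eq hpne1, ht]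
    field_simp
    ring
  have hmain : H n * P = 2 := by
    have h2n : ((2 * n : ℕ) : ℝ) = ∏ p ∈ F, (∑ k ∈ Finset.range (e p + 1), (p:ℝ) ^ k) := by
      rw [hprod]; push_cast; rfl
    rw [Finset.prod_congr rfl hfac, Finset.prod_mul_distrib, Finset.prod_mul_distrib] at h2n
    rw [← hnR] at h2n
    push_cast at h2n
    have hne : (n:ℝ) ≠ 0 := Nat.cast_ne_zero.mpr hn0'
    have : H n * P * (n:ℝ) = 2 * (n:ℝ) := by
      unfold H
      rw [← hF, hP]
      linarith [h2n]
    exact mul_right_cancel₀ hne this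
  -- bound the sum ∑ (1 - t p)
  set B : ℝ := (a^2)⁻¹ + (2*(a-1)^2)⁻¹ with hB
  clear_value B
  have hcube : ∀ (G : Finset ℕ), G ⊆ F →
      ∑ p ∈ G, ((p:ℝ)^3)⁻¹ ≤ (2*(a-1)^2)⁻¹ := by
    intro G hG
    exact cube_sum G n.minFac (by omega) (fun p hp =>
      Nat.minFac_le_of_dvd (hmem p (hG hp)).1.two_le (hmem p (hG hp)).2.1)
  have hterm3 : ∀ p ∈ F, p ≠ q → ((p:ℝ) ^ (e p + 1))⁻¹ ≤ ((p:ℝ)^3)⁻¹ := by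
    intro p hp hne
    obtain ⟨-, -, hp11, h1e⟩ := hmem p hp
    have hp11R : (11:ℝ) ≤ (p:ℝ) := by exact_mod_cast hp11
    have h2e : 2 ≤ e p := by
      obtain ⟨m, hm⟩ := hq p hp hne
      omega
    have : ((p:ℝ))^3 ≤ (p:ℝ) ^ (e p + 1) :=
      pow_le_pow_right₀ (by linarith) (by omega)
    exact inv_anti₀ (by positivity) this
  have hsumB : ∑ p ∈ F, (1 - t p) ≤ B := by
    have hval : ∀ p ∈ F, 1 - t p = ((p:ℝ) ^ (e p + 1))⁻¹ := by
      intro p hp; rw [ht]; ring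
    rw [Finset.sum_congr rfl hval]
    by_cases hqF : q ∈ F
    · rw [← Finset.add_sum_erase _ _ hqF]
      have h1 : ((q:ℝ) ^ (e q + 1))⁻¹ ≤ (a^2)⁻¹ := by
        obtain ⟨hqp, hqd, hq11, h1e⟩ := hmem q hqF
        have hq11R : (11:ℝ) ≤ (q:ℝ) := by exact_mod_cast hq11
        have haq : a ≤ (q:ℝ) := by
          rw [haa]
          exact_mod_cast Nat.minFac_le_of_dvd hqp.two_le hqd
        have : a^2 ≤ (q:ℝ) ^ (e q + 1) := by
          calc a^2 ≤ (q:ℝ)^2 := by nlinarith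
            _ ≤ (q:ℝ) ^ (e q + 1) := pow_le_pow_right₀ (by linarith) (by omega)
        exact inv_anti₀ (by positivity) this
      have h2 : ∑ p ∈ F.erase q, ((p:ℝ) ^ (e p + 1))⁻¹ ≤ (2*(a-1)^2)⁻¹ := by
        calc ∑ p ∈ F.erase q, ((p:ℝ) ^ (e p + 1))⁻¹
            ≤ ∑ p ∈ F.erase q, ((p:ℝ)^3)⁻¹ := Finset.sum_le_sum (fun p hp =>
              hterm3 p (Finset.mem_of_mem_erase hp) (Finset.ne_of_mem_erase hp))
          _ ≤ _ := hcube _ (Finset.erase_subset _ _)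
      rw [hB]; linarith
    · have h2 : ∑ p ∈ F, ((p:ℝ) ^ (e p + 1))⁻¹ ≤ (2*(a-1)^2)⁻¹ := by
        calc ∑ p ∈ F, ((p:ℝ) ^ (e p + 1))⁻¹
            ≤ ∑ p ∈ F, ((p:ℝ)^3)⁻¹ := Finset.sum_le_sum (fun p hp =>
              hterm3 p hp (fun h => hqF (h ▸ hp)))
          _ ≤ _ := hcube _ (Finset.Subset.refl _)
      have : (0:ℝ) ≤ (a^2)⁻¹ := by positivity
      rw [hB]; linarith
  -- bounds on B
  have hB1 : B ≤ 1/50 := by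
    have h1 : (a^2)⁻¹ ≤ 1/121 := by
      rw [show (1:ℝ)/121 = ((121:ℝ))⁻¹ by norm_num]
      exact inv_anti₀ (by norm_num) (by nlinarith)
    have h2 : (2*(a-1)^2)⁻¹ ≤ 1/200 := by
      rw [show (1:ℝ)/200 = ((200:ℝ))⁻¹ by norm_num]
      exact inv_anti₀ (by norm_num) (by nlinarith)
    rw [hB]; linarith
  have hBa : B * a^2 ≤ 161/100 := by
    rw [hB, add_mul]
    have h1 : (a^2)⁻¹ * a^2 = 1 := inv_mul_cancel₀ (by positivity)
    have h2 : (2*(a-1)^2)⁻¹ * a^2 ≤ 61/100 := by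
      rw [inv_mul_le_iff₀ (by nlinarith)]
      nlinarith
    linarith
  have hB0 : 0 ≤ B := by rw [hB]; positivity
  have h1B : (0:ℝ) < 1 - B := by linarith
  -- P ≥ 1 - B > 0
  have hPge : 1 - B ≤ P := by
    have hw := weier F t (fun p hp => ?_) (fun p hp => ?_)
    · rw [hP]; linarith [hsumB, hw]
    · obtain ⟨-, -, hp11, -⟩ := hmem p hp
      have hp11R : (11:ℝ) ≤ (p:ℝ) := by exact_mod_cast hp11
      have h1 : (1:ℝ) ≤ ((p:ℝ)) ^ (e p + 1) := one_le_pow₀ (by linarith)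
      have h2 : ((p:ℝ) ^ (e p + 1))⁻¹ ≤ 1 := inv_le_one_iff₀.mpr (Or.inr h1)
      rw [ht]
      simp only []
      linarith
    · rw [ht]
      simp only []
      have : (0:ℝ) ≤ ((p:ℝ) ^ (e p + 1))⁻¹ := by positivity
      linarith
  have hP0 : (0:ℝ) < P := lt_of_lt_of_le h1B hPge
  clear_value P
  -- S n = 2 / P - 2
  have hHn : H n = 2 / P := by
    rw [eq_div_iff hP0.ne']
    exact hmain
  have hS : S n = 2 / P - 2 := by rw [S, hHn]
  -- final estimates
  have hloga : Real.log a ≤ a / 2 := by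
    have h1 : Real.log (a / 2) ≤ a / 2 - 1 := Real.log_le_sub_one_of_pos (by linarith)
    have h2 : Real.log (a / 2) = Real.log a - Real.log 2 :=
      Real.log_div (by linarith) (by norm_num)
    have h3 : Real.log 2 < 0.6931471808 := Real.log_two_lt_d9
    linarith
  have hloga0 : 0 < Real.log a := Real.log_pos (by linarith)
  calc S n = 2 / P - 2 := hS
    _ ≤ 2 / (1 - B) - 2 := by
        have : 2 / P ≤ 2 / (1 - B) := by gcongr  -- 1-B ≤ P, 0 < 1-B
        linarith
    _ < 25 / (4 * a^2) := by
        have heq : 2 / (1 - B) - 2 = 2 * B / (1 - B) := by field_simp; ring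
        rw [heq, div_lt_div_iff₀ h1B (by positivity)]
        nlinarith
    _ ≤ 25 / (8 * a * Real.log a) := by
        apply div_le_div_of_nonneg_left (by norm_num) (by positivity)
        nlinarith
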